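/- The number of pictures between PQ and R equals the sum over all open sets O of R of the product of the number of pictures between P and R|_{O^c} and the number of pictures between Q and R|_O. -/

import Mathlib

def strictOf {α : Type*} (r : α → α → Prop) (i j : α) : Prop := r i j ∧ ¬ r j i

def IsPicture {α β : Type*} (p1 p2 : α → α → Prop) (q1 q2 : β → β → Prop) (f : α ≃ β) : Prop :=
  (∀ i j, p1 i j → q2 (f i) (f j)) ∧
  (∀ i j, strictOf p1 i j → strictOf q2 (f i) (f j)) ∧
  (∀ i j, q1 (f i) (f j) → p2 i j) ∧
  (∀ i j, strictOf q1 (f i) (f j) → strictOf p2 i j)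

def joinLe1 {α β : Type*} (p : α → α → Prop) (q : β → β → Prop) : α ⊕ β → α ⊕ β → Prop
  | Sum.inl a, Sum.inl b => p a b
  | Sum.inr a, Sum.inr b => q a b
  | _, _ => False

def joinLe2 {α β : Type*} (p : α → α → Prop) (q : β → β → Prop) : α ⊕ β → α ⊕ β → Prop
  | Sum.inl a, Sum.inl b => p a b
  | Sum.inr a, Sum.inr b => q a b
  | Sum.inl _, Sum.inr _ => True
  | Sum.inr _, Sum.inl _ => False

def IsOpenSet {α : Type*} (r : α → α → Prop) (O : Set α) : Prop :=
  ∀ i j, r i j → i ∈ O → j ∈ O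

open Classical

section Aux
variable {α β γ : Type*}

noncomputable def Phi [Fintype γ] (f : α ⊕ β ≃ γ) : Finset γ :=
  Finset.univ.filter (fun c => (f.symm c).isRight)

lemma mem_Phi [Fintype γ] (f : α ⊕ β ≃ γ) (c : γ) :
    c ∈ Phi f ↔ ∃ b, f (Sum.inr b) = c := by
  simp only [Phi, Finset.mem_filter, Finset.mem_univ, true_and, Sum.isRight_iff]
  constructor
  · rintro ⟨b, hb⟩; exact ⟨b, by rw [← f.apply_symm_apply c, hb]⟩
  · rintro ⟨b, hb⟩; exact ⟨b, by rw [← hb]; simp⟩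

noncomputable def combineEquiv (O : Finset γ) (g : α ≃ {x : γ // x ∉ O}) (h : β ≃ {x : γ // x ∈ O}) :
    α ⊕ β ≃ γ :=
  (g.sumCongr h).trans ((Equiv.sumComm _ _).trans (Equiv.sumCompl (· ∈ O)))

lemma combine_inl (O : Finset γ) (g : α ≃ {x : γ // x ∉ O}) (h : β ≃ {x : γ // x ∈ O}) (a : α) :
    combineEquiv O g h (Sum.inl a) = (g a).1 := rfl

lemma combine_inr (O : Finset γ) (g : α ≃ {x : γ // x ∉ O}) (h : β ≃ {x : γ // x ∈ O}) (b : β) :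
    combineEquiv O g h (Sum.inr b) = (h b).1 := rfl

lemma natCard_sigma {ι : Type*} [Fintype ι] (F : ι → Type*) [∀ i, Finite (F i)] :
    Nat.card (Σ i, F i) = ∑ i, Nat.card (F i) := by
  letI : ∀ i, Fintype (F i) := fun i => Fintype.ofFinite _
  simp [Nat.card_eq_fintype_card]

end Aux

theorem stmt10 {α β γ : Type*} [Fintype α] [Fintype β] [Fintype γ]
    (p1 p2 : α → α → Prop) (q1 q2 : β → β → Prop) (r1 r2 : γ → γ → Prop) :
    Nat.card {f : α ⊕ β ≃ γ // IsPicture (joinLe1 p1 q1) (joinLe2 p2 q2) r1 r2 f}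
      = ∑ O : Finset γ,
          if IsOpenSet r1 (↑O : Set γ) then
            Nat.card {g : α ≃ {x : γ // x ∉ O} //
                IsPicture p1 p2 (fun x y => r1 x.1 y.1) (fun x y => r2 x.1 y.1) g}
            * Nat.card {h : β ≃ {x : γ // x ∈ O} //
                IsPicture q1 q2 (fun x y => r1 x.1 y.1) (fun x y => r2 x.1 y.1) h}
          else 0 := by
  classical
  set P : (α ⊕ β ≃ γ) → Prop := IsPicture (joinLe1 p1 q1) (joinLe2 p2 q2) r1 r2 with hP
  -- Step 1: decompose by fibers of Phi
  have e1 : {f : α ⊕ β ≃ γ // P f} ≃ Σ O : Finset γ, {f : α ⊕ β ≃ γ // P f ∧ Phi f = O} :=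
    (Equiv.sigmaFiberEquiv (fun f : {f // P f} => Phi f.1)).symm.trans
      (Equiv.sigmaCongrRight (fun O =>
        Equiv.subtypeSubtypeEquivSubtypeInter P (fun f => Phi f = O)))
  rw [Nat.card_congr e1, natCard_sigma]
  apply Finset.sum_congr rfl
  intro O _
  by_cases hO : IsOpenSet r1 (↑O : Set γ)
  · rw [if_pos hO, ← Nat.card_prod]
    apply Nat.card_congr
    symm
    apply Equiv.ofBijective
      (fun gh : {g : α ≃ {x : γ // x ∉ O} //
            IsPicture p1 p2 (fun x y => r1 x.1 y.1) (fun x y => r2 x.1 y.1) g} ×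
          {h : β ≃ {x : γ // x ∈ O} //
            IsPicture q1 q2 (fun x y => r1 x.1 y.1) (fun x y => r2 x.1 y.1) h} =>
        ⟨combineEquiv O gh.1.1 gh.2.1, by
          obtain ⟨⟨g, hg1, hg2, hg3, hg4⟩, ⟨h, hh1, hh2, hh3, hh4⟩⟩ := gh
          refine ⟨⟨?_, ?_, ?_, ?_⟩, ?_⟩
          · rintro (i | i) (j | j) hij
            · exact hg1 i j hij
            · exact hij.elim
            · exact hij.elim
            · exact hh1 i j hij
          · rintro (i | i) (j | j) hij
            · exact hg2 i j hij
            · exact hij.1.elim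
            · exact hij.1.elim
            · exact hh2 i j hij
          · rintro (i | i) (j | j) hij
            · exact hg3 i j hij
            · trivial
            · exact absurd (hO _ _ hij (h i).2) (g j).2
            · exact hh3 i j hij
          · rintro (i | i) (j | j) hij
            · exact hg4 i j hij
            · exact ⟨trivial, not_false⟩
            · exact absurd (hO _ _ hij.1 (h i).2) (g j).2
            · exact hh4 i j hij
          · ext c
            rw [mem_Phi]
            constructor
            · rintro ⟨b, hb⟩; rw [← hb]; exact (h b).2
            · intro hc; exact ⟨h.symm ⟨c, hc⟩, by rw [combine_inr]; simp⟩⟩)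
      ?_
    constructor
    · rintro ⟨⟨g, hg⟩, ⟨h, hh⟩⟩ ⟨⟨g', hg'⟩, ⟨h', hh'⟩⟩ hgh
      have := congrArg Subtype.val hgh
      simp only [Prod.mk.injEq, Subtype.mk.injEq]
      constructor
      · ext a
        exact congrArg Equiv.toFun this |> fun e => congrArg Subtype.val
          (Subtype.ext (congrFun e (Sum.inl a) : _))
      · ext b
        exact congrArg Equiv.toFun this |> fun e => congrArg Subtype.val
          (Subtype.ext (congrFun e (Sum.inr b) : _))
    · rintro ⟨f, ⟨hf1, hf2, hf3, hf4⟩, hPhi⟩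
      have hfl : ∀ a, f (Sum.inl a) ∉ O := by
        intro a ha
        rw [← hPhi, mem_Phi] at ha
        obtain ⟨b, hb⟩ := ha
        cases f.injective hb
      have hfr : ∀ b, f (Sum.inr b) ∈ O := by
        intro b
        rw [← hPhi, mem_Phi]
        exact ⟨b, rfl⟩
      have hgbij : Function.Bijective (fun a => (⟨f (Sum.inl a), hfl a⟩ : {x : γ // x ∉ O})) := by
        constructor
        · intro a a' hh
          exact Sum.inl.inj (f.injective (congrArg Subtype.val hh))
        · rintro ⟨x, hx⟩
          rcases hs : f.symm x with a | b
          · exact ⟨a, Subtype.ext (show f (Sum.inl a) = x by rw [← hs, f.apply_symm_apply])⟩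
          · exact absurd (by rw [← f.apply_symm_apply x, hs]; exact hfr b) hx
      have hhbij : Function.Bijective (fun b => (⟨f (Sum.inr b), hfr b⟩ : {x : γ // x ∈ O})) := by
        constructor
        · intro b b' hh
          exact Sum.inr.inj (f.injective (congrArg Subtype.val hh))
        · rintro ⟨x, hx⟩
          rcases hs : f.symm x with a | b
          · refine absurd hx ?_
            rw [← f.apply_symm_apply x, hs]
            exact hfl a
          · exact ⟨b, Subtype.ext (show f (Sum.inr b) = x by rw [← hs, f.apply_symm_apply])⟩
      refine ⟨⟨⟨Equiv.ofBijective _ hgbij, ?_, ?_, ?_, ?_⟩, ⟨Equiv.ofBijective _ hhbij, ?_, ?_, ?_, ?_⟩⟩, ?_⟩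
      · exact fun i j hij => hf1 (Sum.inl i) (Sum.inl j) hij
      · exact fun i j hij => hf2 (Sum.inl i) (Sum.inl j) hij
      · exact fun i j hij => hf3 (Sum.inl i) (Sum.inl j) hij
      · exact fun i j hij => hf4 (Sum.inl i) (Sum.inl j) hij
      · exact fun i j hij => hf1 (Sum.inr i) (Sum.inr j) hij
      · exact fun i j hij => hf2 (Sum.inr i) (Sum.inr j) hij
      · exact fun i j hij => hf3 (Sum.inr i) (Sum.inr j) hij
      · exact fun i j hij => hf4 (Sum.inr i) (Sum.inr j) hij
      · apply Subtype.ext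
        apply Equiv.ext
        rintro (a | b)
        · exact combine_inl O _ _ a
        · exact combine_inr O _ _ b
  · rw [if_neg hO]
    rw [Nat.card_eq_zero]
    left
    constructor
    rintro ⟨f, ⟨hf1, hf2, hf3, hf4⟩, hPhi⟩
    apply hO
    intro i j hij hi
    rw [← hPhi, Finset.mem_coe, mem_Phi] at hi ⊢
    obtain ⟨b, hb⟩ := hi
    rcases hs : f.symm j with a | b'
    · exfalso
      have : r1 (f (Sum.inr b)) (f (Sum.inl a)) := by
        rw [hb, ← hs, f.apply_symm_apply]; exact hij
      exact hf3 _ _ this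
    · exact ⟨b', by rw [← hs]; simp⟩
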